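/- Let {X(λ)} be a *-resolution of the identity with sup‖X(λ)‖ = 1, F(λ) = X(λ)*X(λ). Then sup_λ ‖F(λ)‖ = 1, F(λ)ξ → 0 strongly as λ → −∞, F(λ)ξ → ξ strongly as λ → +∞, and F is strongly right-continuous; hence {F(λ)} is a generalized resolution of the identity in the sense of Naimark. -/

import Mathlib

open Filter Topology
open scoped InnerProductSpace

/-- For a *-resolution of the identity with `sup‖X(λ)‖ = 1`, the family
`F(λ) = X(λ)*X(λ)` is a generalized resolution of the identity in the sense of Naimark:
it consists of symmetric operators, `sup_λ ‖F(λ)‖ = 1`, it is monotone increasing,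
strongly right-continuous, with strong limits `0` at `-∞` and `I` at `+∞`. -/
theorem star_resolution_F_generalized_resolution
    {H : Type*} [NormedAddCommGroup H] [InnerProductSpace ℂ H] [CompleteSpace H]
    (X : ℝ → H →L[ℂ] H)
    (hnorm : (⨆ l : ℝ, ‖X l‖) = 1)
    (hmul : ∀ l m : ℝ, l < m → (X l).comp (X m) = X l ∧ (X m).comp (X l) = X l)
    (hbot : ∀ ξ : H, Tendsto (fun l => X l ξ) atBot (𝓝 0))
    (htop : ∀ ξ : H, Tendsto (fun l => X l ξ) atTop (𝓝 ξ))
    (hrc : ∀ (l : ℝ) (ξ : H), Tendsto (fun m => X m ξ) (𝓝[>] l) (𝓝 (X l ξ)))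
    (hbotS : ∀ ξ : H, Tendsto (fun l => ContinuousLinearMap.adjoint (X l) ξ) atBot (𝓝 0))
    (htopS : ∀ ξ : H, Tendsto (fun l => ContinuousLinearMap.adjoint (X l) ξ) atTop (𝓝 ξ))
    (hrcS : ∀ (l : ℝ) (ξ : H), Tendsto (fun m => ContinuousLinearMap.adjoint (X m) ξ)
      (𝓝[>] l) (𝓝 (ContinuousLinearMap.adjoint (X l) ξ)))
    (F : ℝ → H →L[ℂ] H)
    (hF : ∀ l, F l = (ContinuousLinearMap.adjoint (X l)).comp (X l)) :
    (∀ l, IsSelfAdjoint (F l)) ∧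
    (⨆ l : ℝ, ‖F l‖) = 1 ∧
    (∀ l m : ℝ, l < m → (F m - F l).IsPositive) ∧
    (∀ ξ : H, Tendsto (fun l => F l ξ) atBot (𝓝 0)) ∧
    (∀ ξ : H, Tendsto (fun l => F l ξ) atTop (𝓝 ξ)) ∧
    (∀ (l : ℝ) (ξ : H), Tendsto (fun m => F m ξ) (𝓝[>] l) (𝓝 (F l ξ))) := by
  -- each ‖X l‖ ≤ 1
  have hbdd : BddAbove (Set.range fun l : ℝ => ‖X l‖) := by
    by_contra h
    rw [Real.iSup_of_not_bddAbove h] at hnorm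
    norm_num at hnorm
  have hXle : ∀ l, ‖X l‖ ≤ 1 := by
    intro l
    calc ‖X l‖ ≤ ⨆ l : ℝ, ‖X l‖ := le_ciSup hbdd l
    _ = 1 := hnorm
  have hFnorm : ∀ l, ‖F l‖ = ‖X l‖ * ‖X l‖ := fun l => by
    rw [hF l]; exact ContinuousLinearMap.norm_adjoint_comp_self (X l)
  have hFle : ∀ l, ‖F l‖ ≤ 1 := fun l => by
    rw [hFnorm l]
    exact mul_le_one₀ (hXle l) (norm_nonneg _) (hXle l)
  have hsa : ∀ l, IsSelfAdjoint (F l) := by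
    intro l
    rw [ContinuousLinearMap.isSelfAdjoint_iff', hF l,
      ContinuousLinearMap.adjoint_comp, ContinuousLinearMap.adjoint_adjoint]
  refine ⟨hsa, ?_, ?_, ?_, ?_, ?_⟩
  · -- sup norm = 1
    have hbddF : BddAbove (Set.range fun l : ℝ => ‖F l‖) := ⟨1, by rintro x ⟨l, rfl⟩; exact hFle l⟩
    refine le_antisymm (ciSup_le hFle) ?_
    have hS : 0 ≤ ⨆ l : ℝ, ‖F l‖ := le_trans (norm_nonneg _) (le_ciSup hbddF 0)
    have h1 : (1 : ℝ) ≤ Real.sqrt (⨆ l : ℝ, ‖F l‖) := by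
      rw [← hnorm]
      refine ciSup_le fun l => ?_
      rw [Real.le_sqrt (norm_nonneg _) hS, sq, ← hFnorm l]
      exact le_ciSup hbddF l
    nlinarith [Real.sq_sqrt hS, Real.sqrt_nonneg (⨆ l : ℝ, ‖F l‖)]
  · -- positivity of differences
    intro l m hlm
    refine ⟨ContinuousLinearMap.isSelfAdjoint_iff_isSymmetric.mp ((hsa m).sub (hsa l)), fun ξ => ?_⟩
    have key : ∀ k, ContinuousLinearMap.reApplyInnerSelf (F k) ξ = ‖X k ξ‖ ^ 2 := by
      intro k
      simp only [ContinuousLinearMap.reApplyInnerSelf, hF k, ContinuousLinearMap.comp_apply,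
        ContinuousLinearMap.adjoint_inner_left]
      rw [inner_self_eq_norm_sq]
    have hsub : ContinuousLinearMap.reApplyInnerSelf (F m - F l) ξ
        = ‖X m ξ‖ ^ 2 - ‖X l ξ‖ ^ 2 := by
      simp only [ContinuousLinearMap.reApplyInnerSelf, ContinuousLinearMap.sub_apply,
        inner_sub_left, map_sub]
      have h1 := key m
      have h2 := key l
      simp only [ContinuousLinearMap.reApplyInnerSelf] at h1 h2
      rw [h1, h2]
    rw [hsub]
    have hXl : X l ξ = X l (X m ξ) := by
      conv_lhs => rw [← (hmul l m hlm).1]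
      rfl
    have : ‖X l ξ‖ ≤ ‖X m ξ‖ := by
      rw [hXl]
      calc ‖X l (X m ξ)‖ ≤ ‖X l‖ * ‖X m ξ‖ := (X l).le_opNorm _
      _ ≤ 1 * ‖X m ξ‖ := by
          exact mul_le_mul_of_nonneg_right (hXle l) (norm_nonneg _)
      _ = ‖X m ξ‖ := one_mul _
    nlinarith [norm_nonneg (X l ξ), norm_nonneg (X m ξ)]
  · -- limit at -∞
    intro ξ
    refine squeeze_zero_norm (a := fun l => ‖X l ξ‖) ?_ ?_
    · intro l
      rw [hF l]
      calc ‖(ContinuousLinearMap.adjoint (X l)).comp (X l) ξ‖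
          ≤ ‖ContinuousLinearMap.adjoint (X l)‖ * ‖X l ξ‖ :=
            (ContinuousLinearMap.adjoint (X l)).le_opNorm _
      _ ≤ 1 * ‖X l ξ‖ := by
          refine mul_le_mul_of_nonneg_right ?_ (norm_nonneg _)
          rw [LinearIsometryEquiv.norm_map]; exact hXle l
      _ = ‖X l ξ‖ := one_mul _
    · simpa using (hbot ξ).norm
  · -- limit at +∞
    intro ξ
    have hdecomp : ∀ l, F l ξ =
        ContinuousLinearMap.adjoint (X l) (X l ξ - ξ) + ContinuousLinearMap.adjoint (X l) ξ := by
      intro l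
      rw [hF l, map_sub]
      simp [ContinuousLinearMap.comp_apply]
    simp only [hdecomp]
    have h1 : Tendsto (fun l => ContinuousLinearMap.adjoint (X l) (X l ξ - ξ)) atTop (𝓝 0) := by
      refine squeeze_zero_norm (a := fun l => ‖X l ξ - ξ‖) ?_ ?_
      · intro l
        calc ‖ContinuousLinearMap.adjoint (X l) (X l ξ - ξ)‖
            ≤ ‖ContinuousLinearMap.adjoint (X l)‖ * ‖X l ξ - ξ‖ :=
              (ContinuousLinearMap.adjoint (X l)).le_opNorm _
        _ ≤ 1 * ‖X l ξ - ξ‖ := by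
            refine mul_le_mul_of_nonneg_right ?_ (norm_nonneg _)
            rw [LinearIsometryEquiv.norm_map]; exact hXle l
        _ = ‖X l ξ - ξ‖ := one_mul _
      · have := (htop ξ).sub_const ξ
        rw [sub_self] at this
        simpa using this.norm
    have := h1.add (htopS ξ)
    rwa [zero_add] at this
  · -- right continuity
    intro l ξ
    have hdecomp : ∀ m, F m ξ =
        ContinuousLinearMap.adjoint (X m) (X m ξ - X l ξ)
          + ContinuousLinearMap.adjoint (X m) (X l ξ) := by
      intro m
      rw [hF m, map_sub]
      simp [ContinuousLinearMap.comp_apply]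
    simp only [hdecomp]
    have h1 : Tendsto (fun m => ContinuousLinearMap.adjoint (X m) (X m ξ - X l ξ))
        (𝓝[>] l) (𝓝 0) := by
      refine squeeze_zero_norm (a := fun m => ‖X m ξ - X l ξ‖) ?_ ?_
      · intro m
        calc ‖ContinuousLinearMap.adjoint (X m) (X m ξ - X l ξ)‖
            ≤ ‖ContinuousLinearMap.adjoint (X m)‖ * ‖X m ξ - X l ξ‖ :=
              (ContinuousLinearMap.adjoint (X m)).le_opNorm _
        _ ≤ 1 * ‖X m ξ - X l ξ‖ := by
            refine mul_le_mul_of_nonneg_right ?_ (norm_nonneg _)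
            rw [LinearIsometryEquiv.norm_map]; exact hXle m
        _ = ‖X m ξ - X l ξ‖ := one_mul _
      · have := (hrc l ξ).sub_const (X l ξ)
        rw [sub_self] at this
        simpa using this.norm
    have h2 := hrcS l (X l ξ)
    simpa using h1.add h2
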